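/- Every piecewise syndetic subset of ℕ contains arbitrarily long arithmetic progressions and has positive upper Banach density. -/

import Mathlib

/-- `A` is finitely embeddable in `B`: every finite subset of `A` has a
rightward translate contained in `B`. -/
def FE (A B : Set ℕ) : Prop :=
  ∀ F : Finset ℕ, (F : Set ℕ) ⊆ A → ∃ k : ℕ, ∀ a ∈ F, k + a ∈ B

/-- A set is thick if it contains arbitrarily long intervals. -/
def Thick (T : Set ℕ) : Prop :=
  ∀ n : ℕ, ∃ k : ℕ, ∀ i ≤ n, k + i ∈ T

/-- A set is piecewise syndetic if some finite union of its translates is thick. -/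
def PWSyndetic (A : Set ℕ) : Prop :=
  ∃ n : ℕ, Thick {m : ℕ | ∃ i ≤ n, ∃ a ∈ A, m = a + i}

/-- Upper Banach density. -/
noncomputable def BD (A : Set ℕ) : ℝ :=
  Filter.atTop.limsup
    (fun n : ℕ => (⨆ k : ℕ, ((A ∩ Set.Icc (k + 1) (k + n)).ncard : ℝ)) / n)

/-- Finite embeddability of ultrafilters. -/
def UFE (U V : Ultrafilter ℕ) : Prop :=
  ∀ B ∈ V, ∃ A ∈ U, FE A B

/-- `A` contains arbitrarily long arithmetic progressions. -/
def HasAPs (A : Set ℕ) : Prop :=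
  ∀ k : ℕ, ∃ a : ℕ, ∃ d ≥ 1, ∀ i < k, a + i * d ∈ A

attribute [local instance] Fin.NatCast.instNatCast

theorem pwSyndetic_hasAPs_and_posBD (A : Set ℕ) (hA : PWSyndetic A) :
    HasAPs A ∧ 0 < BD A := by
  classical
  obtain ⟨n, hThick⟩ := hA
  set T : Set ℕ := {m : ℕ | ∃ i ≤ n, ∃ a ∈ A, m = a + i} with hTdef
  -- selection functions: for x ∈ T pick idx x ≤ n and elt x ∈ A with x = elt x + idx x
  have hsel : ∀ x : ℕ, ∃ i e : ℕ, x ∈ T → (i ≤ n ∧ e ∈ A ∧ x = e + i) := by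
    intro x
    by_cases hx : x ∈ T
    · obtain ⟨i, hi, e, he, heq⟩ := hx
      exact ⟨i, e, fun _ => ⟨hi, he, heq⟩⟩
    · exact ⟨0, 0, fun hx' => absurd hx' hx⟩
  choose idx elt hspec using hsel
  -- start of a thick interval of each length
  have hK : ∀ N : ℕ, ∃ k : ℕ, ∀ i ≤ N, k + i ∈ T := hThick
  choose K hKmem using hK
  constructor
  · -- HasAPs via van der Waerden
    intro k
    rcases Nat.eq_zero_or_pos k with hk | hk
    · exact ⟨0, 1, le_refl 1, fun i hi => by omega⟩
    -- ultrafilter extending atTop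
    set U : Ultrafilter ℕ := Ultrafilter.of Filter.atTop with hU
    have hUle : (U : Filter ℕ) ≤ Filter.atTop := Ultrafilter.of_le _
    -- limit coloring
    have hlim : ∀ m : ℕ, ∃ i : Fin (n + 1),
        {N : ℕ | ((idx (K N + m) : ℕ) : Fin (n + 1)) = i} ∈ U := by
      intro m
      by_contra h
      push_neg at h
      have hcompl : ∀ i : Fin (n + 1),
          {N : ℕ | ((idx (K N + m) : ℕ) : Fin (n + 1)) = i}ᶜ ∈ U :=
        fun i => Ultrafilter.compl_mem_iff_notMem.2 (h i)
      have hint : (⋂ i : Fin (n + 1),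
          {N : ℕ | ((idx (K N + m) : ℕ) : Fin (n + 1)) = i}ᶜ) ∈ U :=
        Filter.iInter_mem.2 hcompl
      obtain ⟨N, hN⟩ := Ultrafilter.nonempty_of_mem hint
      simp only [Set.mem_iInter, Set.mem_compl_iff, Set.mem_setOf_eq] at hN
      exact hN _ rfl
    choose c hc using hlim
    obtain ⟨a, ha, b, i0, hmono⟩ := Combinatorics.exists_mono_homothetic_copy (Finset.range k) c
    -- pick a good N
    have h1 : (⋂ s ∈ Finset.range k,
        {N : ℕ | ((idx (K N + (a * s + b)) : ℕ) : Fin (n + 1)) = i0}) ∈ (U : Filter ℕ) := by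
      refine (Filter.biInter_finset_mem _).2 ?_
      intro s hs
      have := hc (a * s + b)
      have heq : c (a * s + b) = i0 := by
        have := hmono s hs
        simpa [smul_eq_mul] using this
      rwa [heq] at this
    have h2 : {N : ℕ | a * (k - 1) + b ≤ N} ∈ (U : Filter ℕ) :=
      hUle (Filter.mem_atTop (a * (k - 1) + b))
    obtain ⟨N, hN1, hN2⟩ := Filter.nonempty_of_mem (Filter.inter_mem h1 h2)
    simp only [Set.mem_iInter, Set.mem_setOf_eq, Finset.mem_range] at hN1 hN2
    -- key: every point of the AP pattern translates into A
    have key : ∀ i, i < k → elt (K N + (a * i + b)) ∈ A ∧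
        K N + (a * i + b) = elt (K N + (a * i + b)) + i0.val := by
      intro i hi
      have hle : a * i + b ≤ N := by
        have : a * i ≤ a * (k - 1) := Nat.mul_le_mul le_rfl (by omega)
        omega
      have hT : K N + (a * i + b) ∈ T := hKmem N _ hle
      obtain ⟨hidx, heA, heq⟩ := hspec _ hT
      have hcol : ((idx (K N + (a * i + b)) : ℕ) : Fin (n + 1)) = i0 := hN1 i hi
      have hval : idx (K N + (a * i + b)) % (n + 1) = i0.val := by
        rw [← Fin.val_natCast]; exact congrArg Fin.val hcol
      have hmod : idx (K N + (a * i + b)) % (n + 1) = idx (K N + (a * i + b)) :=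
        Nat.mod_eq_of_lt (by omega)
      rw [hmod] at hval
      refine ⟨heA, ?_⟩
      conv_lhs => rw [heq]
      rw [hval]
    obtain ⟨-, h0⟩ := key 0 hk
    have hge : i0.val ≤ K N + b := by
      have := h0; omega
    refine ⟨K N + b - i0.val, a, ha, ?_⟩
    intro i hi
    obtain ⟨heA, heq⟩ := key i hi
    have hcomm : i * a = a * i := mul_comm i a
    rw [hcomm]
    have : K N + b - i0.val + a * i = elt (K N + (a * i + b)) := by
      have h' := heq
      generalize a * i = t at h' ⊢
      omega
    rw [this]; exact heA
  · -- positive upper Banach density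
    -- counting lemma
    have count : ∀ N : ℕ, 1 ≤ N → ∃ Kk : ℕ,
        N ≤ (n + 1) * (A ∩ Set.Icc (Kk + 1) (Kk + (N + n))).ncard := by
      intro N hN
      refine ⟨K (n + N), ?_⟩
      set Kv := K (n + N) with hKv
      set F : Finset ℕ := (Finset.Icc (Kv + 1) (Kv + (N + n))).filter (· ∈ A) with hF
      set s : Finset ℕ := Finset.Icc (Kv + n + 1) (Kv + n + N) with hs
      have hmemT : ∀ m ∈ s, m ∈ T := by
        intro m hm
        rw [hs, Finset.mem_Icc] at hm
        have : Kv + (m - Kv) ∈ T := hKmem (n + N) (m - Kv) (by omega)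
        have hmeq : Kv + (m - Kv) = m := by omega
        rwa [hmeq] at this
      have hmaps : ∀ m ∈ s, elt m ∈ F := by
        intro m hm
        obtain ⟨hidx, heA, heq⟩ := hspec m (hmemT m hm)
        rw [hs, Finset.mem_Icc] at hm
        rw [hF, Finset.mem_filter, Finset.mem_Icc]
        exact ⟨by omega, heA⟩
      have hfib : ∀ bb ∈ F, (s.filter (fun m => elt m = bb)).card ≤ n + 1 := by
        intro bb _
        have hsub : s.filter (fun m => elt m = bb) ⊆ Finset.Icc bb (bb + n) := by
          intro m hm
          rw [Finset.mem_filter] at hm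
          obtain ⟨hms, hbb⟩ := hm
          obtain ⟨hidx, heA, heq⟩ := hspec m (hmemT m hms)
          rw [Finset.mem_Icc]
          omega
        calc (s.filter (fun m => elt m = bb)).card ≤ (Finset.Icc bb (bb + n)).card :=
              Finset.card_le_card hsub
          _ = n + 1 := by rw [Nat.card_Icc]; omega
      have hcard : s.card ≤ (n + 1) * F.card :=
        Finset.card_le_mul_card_image_of_maps_to hmaps (n + 1) hfib
      have hscard : s.card = N := by rw [hs, Nat.card_Icc]; omega
      have hncard : (A ∩ Set.Icc (Kv + 1) (Kv + (N + n))).ncard = F.card := by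
        have hset : A ∩ Set.Icc (Kv + 1) (Kv + (N + n)) = ↑F := by
          ext x
          simp only [hF, Finset.coe_filter, Finset.mem_Icc, Set.mem_setOf_eq,
            Set.mem_inter_iff, Set.mem_Icc]
          tauto
        rw [hset, Set.ncard_coe_finset]
      rw [hncard, ← hscard]
      exact hcard
    -- bounds on window counts
    have hbddN : ∀ M kk : ℕ, ((A ∩ Set.Icc (kk + 1) (kk + M)).ncard : ℝ) ≤ M := by
      intro M kk
      have h1 : (A ∩ Set.Icc (kk + 1) (kk + M)).ncard ≤ M := by
        have h2 : (A ∩ Set.Icc (kk + 1) (kk + M)).ncard ≤ (Set.Icc (kk + 1) (kk + M)).ncard :=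
          Set.ncard_le_ncard Set.inter_subset_right (Set.finite_Icc _ _)
        have h3 : (Set.Icc (kk + 1 : ℕ) (kk + M)).ncard = M := by
          rw [← Finset.coe_Icc, Set.ncard_coe_finset, Nat.card_Icc]; omega
        omega
      exact_mod_cast h1
    set f : ℕ → ℝ := fun M => (⨆ k : ℕ, ((A ∩ Set.Icc (k + 1) (k + M)).ncard : ℝ)) / M with hf
    have hbAbove : ∀ M : ℕ, BddAbove (Set.range fun k : ℕ =>
        ((A ∩ Set.Icc (k + 1) (k + M)).ncard : ℝ)) := by
      intro M
      exact ⟨M, by rintro _ ⟨kk, rfl⟩; exact hbddN M kk⟩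
    have hf_le : ∀ M : ℕ, f M ≤ 1 := by
      intro M
      rcases Nat.eq_zero_or_pos M with hM | hM
      · simp [hf, hM]
      · have hsup : (⨆ k : ℕ, ((A ∩ Set.Icc (k + 1) (k + M)).ncard : ℝ)) ≤ M :=
          ciSup_le (hbddN M)
        rw [hf]
        have hMpos : (0 : ℝ) < M := by exact_mod_cast hM
        rw [div_le_one hMpos]
        exact hsup
    set cst : ℝ := 1 / (2 * (n + 1)) with hcst
    have hcst_pos : 0 < cst := by rw [hcst]; positivity
    have hev : ∀ M : ℕ, 2 * n + 2 ≤ M → cst ≤ f M := by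
      intro M hM
      set N := M - n with hNdef
      have hN1 : 1 ≤ N := by omega
      obtain ⟨Kk, hKk⟩ := count N hN1
      have hNM : N + n = M := by omega
      rw [hNM] at hKk
      have hterm : ((A ∩ Set.Icc (Kk + 1) (Kk + M)).ncard : ℝ) ≤
          ⨆ k : ℕ, ((A ∩ Set.Icc (k + 1) (k + M)).ncard : ℝ) :=
        le_ciSup (hbAbove M) Kk
      have hMpos : (0 : ℝ) < M := by
        have : 0 < M := by omega
        exact_mod_cast this
      rw [hf, le_div_iff₀ hMpos]
      -- cst * M ≤ ncard ≤ sup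
      have h2N : (M : ℝ) ≤ 2 * N := by
        have : M ≤ 2 * N := by omega
        exact_mod_cast this
      have hcount : (N : ℝ) ≤ (n + 1) * ((A ∩ Set.Icc (Kk + 1) (Kk + M)).ncard : ℝ) := by
        exact_mod_cast hKk
      have hn1 : (0 : ℝ) < (n : ℝ) + 1 := by positivity
      have hstep : cst * M ≤ ((A ∩ Set.Icc (Kk + 1) (Kk + M)).ncard : ℝ) := by
        rw [hcst]
        rw [div_mul_eq_mul_div, one_mul, div_le_iff₀ (by positivity)]
        nlinarith
      calc cst * M ≤ ((A ∩ Set.Icc (Kk + 1) (Kk + M)).ncard : ℝ) := hstep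
        _ ≤ _ := hterm
    have hfreq : ∃ᶠ M in Filter.atTop, cst ≤ f M :=
      ((Filter.eventually_ge_atTop (2 * n + 2)).mono hev).frequently
    have hbound : Filter.IsBoundedUnder (· ≤ ·) Filter.atTop f :=
      Filter.isBoundedUnder_of ⟨1, hf_le⟩
    have hle : cst ≤ BD A := by
      have := Filter.le_limsup_of_frequently_le hfreq hbound
      exact this
    linarith
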